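/- Let (P, A, λ) be a marked poset and let x be a point of the marked order polytope O_{P,A}(λ). Then x is a vertex (extreme point) of O_{P,A}(λ) if and only if every connected component of the identity diagram of x contains an element of A. -/

import Mathlib

open Classical in
/-- The extension of `x : P∖A → ℝ` to all of `P`, taking the value `lam a` on marked
elements `a ∈ A`. -/
noncomputable def mopExtend {P : Type*} (A : Set P) (lam : A → ℝ)
    (x : {p : P // p ∉ A} → ℝ) : P → ℝ :=
  fun p => if h : p ∈ A then lam ⟨p, h⟩ else x ⟨p, h⟩

/-- The marked order polytope of the marked poset `(P, A, lam)`, realized in `ℝ^{P∖A}`. -/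
def markedOrderPolytope {P : Type*} [PartialOrder P] (A : Set P) (lam : A → ℝ) :
    Set ({p : P // p ∉ A} → ℝ) :=
  {x | ∀ p q : P, p ≤ q → mopExtend A lam x p ≤ mopExtend A lam x q}

/-- Two elements `p q : P` are directly linked in the identity diagram of `x` if one
covers the other in `P` and the extended coordinates agree. -/
def identityLinked {P : Type*} [PartialOrder P] (A : Set P) (lam : A → ℝ)
    (x : {p : P // p ∉ A} → ℝ) (p q : P) : Prop :=
  (p ⋖ q ∨ q ⋖ p) ∧ mopExtend A lam x p = mopExtend A lam x q

lemma pinch_le {a b u v m : ℝ} (ha : 0 < a) (hb : 0 < b) (hab : a + b = 1)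
    (hu : u ≤ m) (hv : v ≤ m) (h : a * u + b * v = m) : u = m ∧ v = m := by
  have hm : a * m + b * m = m := by linear_combination m * hab
  have h1 : a * u ≤ a * m := mul_le_mul_of_nonneg_left hu ha.le
  have h2 : b * v ≤ b * m := mul_le_mul_of_nonneg_left hv hb.le
  constructor
  · by_contra hne
    have : a * u < a * m := mul_lt_mul_of_pos_left (lt_of_le_of_ne hu hne) ha
    linarith
  · by_contra hne
    have : b * v < b * m := mul_lt_mul_of_pos_left (lt_of_le_of_ne hv hne) hb
    linarith

lemma pinch_ge {a b u v m : ℝ} (ha : 0 < a) (hb : 0 < b) (hab : a + b = 1)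
    (hu : m ≤ u) (hv : m ≤ v) (h : a * u + b * v = m) : u = m ∧ v = m := by
  have hm : a * m + b * m = m := by linear_combination m * hab
  have h1 : a * m ≤ a * u := mul_le_mul_of_nonneg_left hu ha.le
  have h2 : b * m ≤ b * v := mul_le_mul_of_nonneg_left hv hb.le
  constructor
  · by_contra hne
    have : a * m < a * u := mul_lt_mul_of_pos_left (lt_of_le_of_ne hu (Ne.symm hne)) ha
    linarith
  · by_contra hne
    have : b * m < b * v := mul_lt_mul_of_pos_left (lt_of_le_of_ne hv (Ne.symm hne)) hb
    linarith

/-- A point of a marked order polytope is a vertex if and only if every connected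
component of its identity diagram contains a marked element. -/
theorem statement0 {P : Type*} [Fintype P] [PartialOrder P]
    (A : Set P) (lam : A → ℝ)
    (hAmin : ∀ p : P, IsMin p → p ∈ A) (hAmax : ∀ p : P, IsMax p → p ∈ A)
    (hlam : ∀ a b : A, (a : P) ≤ (b : P) → lam a ≤ lam b)
    (x : {p : P // p ∉ A} → ℝ) (hx : x ∈ markedOrderPolytope A lam) :
    x ∈ (markedOrderPolytope A lam).extremePoints ℝ ↔
      ∀ p : P, ∃ a ∈ A, Relation.EqvGen (identityLinked A lam x) p a := by
  classical
  haveI : LocallyFiniteOrder P := Fintype.toLocallyFiniteOrder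
  have hxm : ∀ p q : P, p ≤ q → mopExtend A lam x p ≤ mopExtend A lam x q := hx
  -- equal values along ≤ give a path in the identity diagram
  have hsame : ∀ p q : P, p ≤ q → mopExtend A lam x p = mopExtend A lam x q →
      Relation.EqvGen (identityLinked A lam x) p q := by
    intro p q hpq
    have hchain : Relation.ReflTransGen (· ⋖ ·) p q := le_iff_reflTransGen_covBy.mp hpq
    clear hpq
    induction hchain with
    | refl => exact fun _ => Relation.EqvGen.refl p
    | tail hpr hrq ih =>
      rename_i r q'
      intro heq
      have h1 : p ≤ r := by
        clear ih heq hrq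
        induction hpr with
        | refl => exact le_refl p
        | tail _ hcov ih' => exact le_trans ih' hcov.le
      have h2 : mopExtend A lam x p ≤ mopExtend A lam x r := hxm p r h1
      have h3 : mopExtend A lam x r ≤ mopExtend A lam x q' := hxm r q' hrq.le
      have e1 : mopExtend A lam x p = mopExtend A lam x r := le_antisymm h2 (heq ▸ h3)
      have e2 : mopExtend A lam x r = mopExtend A lam x q' := le_antisymm h3 (e1 ▸ heq.symm ▸ le_refl _)
      exact Relation.EqvGen.trans _ _ _ (ih e1)
        (Relation.EqvGen.rel _ _ ⟨Or.inl hrq, e2⟩)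
  constructor
  · -- extreme point → every component hits A
    rintro ⟨-, hext⟩ p₀
    by_contra hcon
    push_neg at hcon
    set C : Set P := {q | Relation.EqvGen (identityLinked A lam x) p₀ q} with hC
    have hCA : ∀ q ∈ C, q ∉ A := fun q hq hqA => hcon q hqA hq
    have hp₀C : p₀ ∈ C := Relation.EqvGen.refl p₀
    have hp₀A : p₀ ∉ A := hCA p₀ hp₀C
    -- choose δ
    set s : Finset ℝ := insert 1 (((Finset.univ : Finset (P × P)).filter
        (fun pq => mopExtend A lam x pq.1 < mopExtend A lam x pq.2)).image
        (fun pq => mopExtend A lam x pq.2 - mopExtend A lam x pq.1)) with hs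
    have hsne : s.Nonempty := ⟨1, Finset.mem_insert_self _ _⟩
    set δ : ℝ := s.min' hsne with hδ
    have hδpos : 0 < δ := by
      rw [hδ, Finset.lt_min'_iff]
      intro r hr
      rw [hs, Finset.mem_insert] at hr
      rcases hr with h1 | h2
      · rw [h1]; norm_num
      · obtain ⟨pq, hpq, rfl⟩ := Finset.mem_image.mp h2
        have := (Finset.mem_filter.mp hpq).2
        linarith
    have hδle : ∀ p q : P, mopExtend A lam x p < mopExtend A lam x q →
        δ ≤ mopExtend A lam x q - mopExtend A lam x p := by
      intro p q hlt
      apply Finset.min'_le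
      rw [hs]
      exact Finset.mem_insert_of_mem (Finset.mem_image.mpr
        ⟨(p, q), Finset.mem_filter.mpr ⟨Finset.mem_univ _, hlt⟩, rfl⟩)
    have hstrict : ∀ p q : P, p ≤ q → ¬(p ∈ C ↔ q ∈ C) →
        mopExtend A lam x p < mopExtend A lam x q := by
      intro p q hpq hcross
      refine lt_of_le_of_ne (hxm p q hpq) fun heq => hcross ?_
      have hpqE := hsame p q hpq heq
      constructor
      · intro hp; exact Relation.EqvGen.trans _ _ _ hp hpqE
      · intro hq; exact Relation.EqvGen.trans _ _ _ hq (Relation.EqvGen.symm _ _ hpqE)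
    set y : {p : P // p ∉ A} → ℝ := fun p => x p + if (p : P) ∈ C then δ else 0 with hy
    set z : {p : P // p ∉ A} → ℝ := fun p => x p - if (p : P) ∈ C then δ else 0 with hz
    have hyext : ∀ p : P, mopExtend A lam y p =
        mopExtend A lam x p + if p ∈ C then δ else 0 := by
      intro p
      by_cases hpA : p ∈ A
      · have hpC : p ∉ C := fun h => hCA p h hpA
        simp [mopExtend, hpA, hpC]
      · simp [mopExtend, hpA, hy]
    have hzext : ∀ p : P, mopExtend A lam z p =
        mopExtend A lam x p - if p ∈ C then δ else 0 := by
      intro p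
      by_cases hpA : p ∈ A
      · have hpC : p ∉ C := fun h => hCA p h hpA
        simp [mopExtend, hpA, hpC]
      · simp [mopExtend, hpA, hz]
    have hymem : y ∈ markedOrderPolytope A lam := by
      intro p q hpq
      rw [hyext p, hyext q]
      by_cases hpC : p ∈ C <;> by_cases hqC : q ∈ C <;> simp [hpC, hqC]
      · exact hxm p q hpq
      · have hlt := hstrict p q hpq (by simp [hpC, hqC])
        have := hδle p q hlt
        linarith
      · have := hxm p q hpq
        linarith
      · exact hxm p q hpq
    have hzmem : z ∈ markedOrderPolytope A lam := by
      intro p q hpq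
      rw [hzext p, hzext q]
      by_cases hpC : p ∈ C <;> by_cases hqC : q ∈ C <;> simp [hpC, hqC]
      · exact hxm p q hpq
      · have := hxm p q hpq
        linarith
      · have hlt := hstrict p q hpq (by simp [hpC, hqC])
        have := hδle p q hlt
        linarith
      · exact hxm p q hpq
    have hseg : x ∈ openSegment ℝ y z := by
      refine ⟨1/2, 1/2, by norm_num, by norm_num, by norm_num, ?_⟩
      funext p
      simp only [Pi.add_apply, Pi.smul_apply, smul_eq_mul, hy, hz]
      ring
    have := hext hymem hzmem hseg
    have := congrFun this ⟨p₀, hp₀A⟩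
    simp only [hy, hp₀C, if_pos, if_true] at this
    linarith
  · -- every component hits A → extreme point
    intro h
    rw [mem_extremePoints]
    refine ⟨hx, fun y hy z hz hseg => ?_⟩
    obtain ⟨a, b, ha, hb, hab, hcomb⟩ := hseg
    have key : ∀ p : P, a * mopExtend A lam y p + b * mopExtend A lam z p =
        mopExtend A lam x p := by
      intro p
      by_cases hpA : p ∈ A
      · simp only [mopExtend, dif_pos hpA]
        calc a * lam ⟨p, hpA⟩ + b * lam ⟨p, hpA⟩ = (a + b) * lam ⟨p, hpA⟩ := by ring
          _ = lam ⟨p, hpA⟩ := by rw [hab, one_mul]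
      · have := congrFun hcomb ⟨p, hpA⟩
        simpa [mopExtend, hpA] using this
    set S : Set P := {p | mopExtend A lam y p = mopExtend A lam x p ∧
        mopExtend A lam z p = mopExtend A lam x p} with hS
    have step : ∀ p q : P, identityLinked A lam x p q → q ∈ S → p ∈ S := by
      rintro p q ⟨hcov, heq⟩ ⟨hyq, hzq⟩
      rcases hcov with hpq | hqp
      · have h1 : mopExtend A lam y p ≤ mopExtend A lam x p := by
          calc mopExtend A lam y p ≤ mopExtend A lam y q := hy p q hpq.le
            _ = mopExtend A lam x q := hyq
            _ = mopExtend A lam x p := heq.symm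
        have h2 : mopExtend A lam z p ≤ mopExtend A lam x p := by
          calc mopExtend A lam z p ≤ mopExtend A lam z q := hz p q hpq.le
            _ = mopExtend A lam x q := hzq
            _ = mopExtend A lam x p := heq.symm
        exact pinch_le ha hb hab h1 h2 (key p)
      · have h1 : mopExtend A lam x p ≤ mopExtend A lam y p := by
          calc mopExtend A lam x p = mopExtend A lam x q := heq
            _ = mopExtend A lam y q := hyq.symm
            _ ≤ mopExtend A lam y p := hy q p hqp.le
        have h2 : mopExtend A lam x p ≤ mopExtend A lam z p := by
          calc mopExtend A lam x p = mopExtend A lam x q := heq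
            _ = mopExtend A lam z q := hzq.symm
            _ ≤ mopExtend A lam z p := hz q p hqp.le
        exact pinch_ge ha hb hab h1 h2 (key p)
    have hcompS : ∀ p q : P, Relation.EqvGen (identityLinked A lam x) p q →
        (p ∈ S ↔ q ∈ S) := by
      intro p q hpq
      induction hpq with
      | rel p q hr => exact ⟨step q p ⟨hr.1.symm, hr.2.symm⟩, step p q hr⟩
      | refl => exact Iff.rfl
      | symm _ _ _ ih => exact ih.symm
      | trans _ _ _ _ _ ih1 ih2 => exact ih1.trans ih2
    have hAS : ∀ a' ∈ A, a' ∈ S := by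
      intro a' ha'
      constructor <;> simp [mopExtend, ha']
    have hall : ∀ p : P, p ∈ S := by
      intro p
      obtain ⟨a', ha', he⟩ := h p
      exact (hcompS p a' he).mpr (hAS a' ha')
    constructor
    · funext p
      have := (hall p).1
      simpa [mopExtend, p.2] using this
    · funext p
      have := (hall p).2
      simpa [mopExtend, p.2] using this
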